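/- Let R be a commutative local ring and let M be a finite free R-module equipped with a symplectic form φ. Then there exist a natural number n and a basis e₁, …, e_{2n} of M in which the Gram matrix of φ is the block-diagonal matrix with n diagonal blocks equal to the 2×2 matrix ((0,1),(−1,0)); that is, φ(e_{2i−1}, e_{2i}) = 1 and φ(e_{2i}, e_{2i−1}) = −1 for 1 ≤ i ≤ n, and φ(e_j, e_k) = 0 for all other pairs j ≠ k. -/

import Mathlib

universe u v

private theorem symp_skew {R : Type v} [CommRing R] {M : Type u} [AddCommGroup M] [Module R M]
    (φ : M →ₗ[R] M →ₗ[R] R) (halt : ∀ x : M, φ x x = 0) (a b : M) :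
    φ a b = - φ b a := by
  have h := halt (a + b)
  simp only [map_add, LinearMap.add_apply, halt] at h
  linear_combination h

private theorem symp_aux (R : Type v) [CommRing R] [IsLocalRing R] (r : ℕ) :
    ∀ (M : Type u) [AddCommGroup M] [Module R M] [Module.Finite R M] [Module.Free R M]
      (φ : M →ₗ[R] M →ₗ[R] R), (∀ x : M, φ x x = 0) → Function.Bijective φ →
      Module.finrank R M = r →
      ∃ (n : ℕ) (e : Module.Basis (Fin (2 * n)) R M),
        ∀ j k : Fin (2 * n),
          φ (e j) (e k) =
            if (j : ℕ) % 2 = 0 ∧ (k : ℕ) = (j : ℕ) + 1 then (1 : R)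
            else if (k : ℕ) % 2 = 0 ∧ (j : ℕ) = (k : ℕ) + 1 then (-1 : R)
            else 0 := by
  induction r using Nat.strong_induction_on with
  | _ r ih =>
  intro M _ _ _ _ φ halt hnd hrank
  rcases Nat.eq_zero_or_pos r with hr0 | hrpos
  · -- rank zero: M is trivial
    subst hr0
    have b0 : Module.Basis (Fin 0) R M := (Module.finBasis R M).reindex (finCongr hrank)
    exact ⟨0, b0, fun j k => absurd j.isLt (by omega)⟩
  · -- pick x a basis vector and y with φ x y = 1
    have b : Module.Basis (Fin r) R M := (Module.finBasis R M).reindex (finCongr hrank)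
    set i0 : Fin r := ⟨0, hrpos⟩
    set x : M := b i0 with hxdef
    obtain ⟨z, hz⟩ := hnd.2 (b.coord i0)
    set y : M := -z with hydef
    have hxy : φ x y = 1 := by
      have h1 : φ z x = 1 := by
        rw [hz]; simp [hxdef, Module.Basis.coord_apply, Module.Basis.repr_self]
      rw [hydef, map_neg, symp_skew φ halt x z, h1]; ring
    have hyx : φ y x = -1 := by rw [symp_skew φ halt y x, hxy]
    -- the symplectic complement of span {x, y}
    set N : Submodule R M := LinearMap.ker (φ x) ⊓ LinearMap.ker (φ y) with hNdef
    have memN : ∀ m : M, m ∈ N ↔ φ x m = 0 ∧ φ y m = 0 := by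
      intro m; simp [hNdef, Submodule.mem_inf, LinearMap.mem_ker]
    have key : ∀ m : M, m - ((φ x m) • y - (φ y m) • x) ∈ N := by
      intro m
      rw [memN]
      constructor
      · simp [map_sub, map_smul, hxy, halt, smul_eq_mul]
      · simp [map_sub, map_smul, hyx, halt, smul_eq_mul]
    set P : Submodule R M := Submodule.span R (Set.range ![x, y]) with hPdef
    have hxP : x ∈ P := Submodule.subset_span ⟨0, rfl⟩
    have hyP : y ∈ P := Submodule.subset_span ⟨1, rfl⟩
    have li : LinearIndependent R ![x, y] := by
      rw [LinearIndependent.pair_iff]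
      intro s t hst
      have h1 := congrArg (fun m => φ y m) hst
      have h2 := congrArg (fun m => φ x m) hst
      simp [map_add, map_smul, hxy, hyx, halt, smul_eq_mul] at h1 h2
      exact ⟨h1, h2⟩
    have hcompl : IsCompl P N := by
      constructor
      · rw [disjoint_iff_inf_le]
        intro m hm
        have hmP : m ∈ P := hm.1
        have hmN := (memN m).mp hm.2
        obtain ⟨c, hc⟩ := (Submodule.mem_span_range_iff_exists_fun R).mp hmP
        rw [Fin.sum_univ_two] at hc
        simp only [Matrix.cons_val_zero, Matrix.cons_val_one, Matrix.head_cons] at hc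
        have h1 : φ x m = c 1 := by
          rw [← hc]; simp [map_add, map_smul, hxy, halt, smul_eq_mul]
        have h2 : φ y m = -(c 0) := by
          rw [← hc]; simp [map_add, map_smul, hyx, halt, smul_eq_mul]
        have hc1 : c 1 = 0 := by rw [← h1, hmN.1]
        have hc0 : c 0 = 0 := by have := hmN.2; rw [h2] at this; linear_combination -this
        simp only [Submodule.mem_bot]
        rw [← hc, hc0, hc1, zero_smul, zero_smul, add_zero]
      · rw [codisjoint_iff, eq_top_iff]
        intro m _
        have : m = ((φ x m) • y - (φ y m) • x) + (m - ((φ x m) • y - (φ y m) • x)) := by abel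
        rw [this]
        exact Submodule.add_mem_sup (Submodule.sub_mem _ (Submodule.smul_mem _ _ hyP)
          (Submodule.smul_mem _ _ hxP)) (key m)
    -- instances on N
    have proj : M →ₗ[R] N := N.projectionOnto P hcompl.symm
    haveI : Module.Finite R N := Module.Finite.of_surjective
      (N.projectionOnto P hcompl.symm)
      (fun n => ⟨n, Submodule.projectionOnto_apply_left hcompl.symm n⟩)
    haveI : Module.Projective R N := Module.Projective.of_split N.subtype
      (N.projectionOnto P hcompl.symm)
      (by ext n; simp [Submodule.projectionOnto_apply_left])
    haveI : Module.FinitePresentation R N := Module.finitePresentation_of_projective R N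
    haveI : Module.Free R N := Module.free_of_flat_of_isLocalRing
    -- the restricted form on N
    set φN : N →ₗ[R] N →ₗ[R] R := LinearMap.compl₁₂ φ N.subtype N.subtype with hφNdef
    have hφN_apply : ∀ a b : N, φN a b = φ (a : M) (b : M) := fun a b => rfl
    have haltN : ∀ a : N, φN a a = 0 := fun a => halt (a : M)
    have memNx : ∀ a : N, φ x (a : M) = 0 ∧ φ y (a : M) = 0 := fun a => (memN _).mp a.2
    have hndN : Function.Bijective φN := by
      constructor
      · rw [← LinearMap.ker_eq_bot, eq_bot_iff]
        intro a ha
        simp only [LinearMap.mem_ker] at ha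
        have hφa : φ (a : M) = 0 := by
          ext m
          have hdm := key m
          have hm : m = ((φ x m) • y - (φ y m) • x) + (m - ((φ x m) • y - (φ y m) • x)) := by abel
          rw [LinearMap.zero_apply, hm, map_add, map_sub, map_smul, map_smul]
          have hax : φ (a : M) x = 0 := by
            rw [symp_skew φ halt, (memNx a).1, neg_zero]
          have hay : φ (a : M) y = 0 := by
            rw [symp_skew φ halt, (memNx a).2, neg_zero]
          have han : φ (a : M) (m - ((φ x m) • y - (φ y m) • x)) = 0 := by
            have := congrArg (fun f => f (⟨_, key m⟩ : N)) ha
            simpa [hφN_apply] using this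
          rw [hax, hay, han, smul_zero, smul_zero]; ring
        have : (a : M) = 0 := hnd.1 (by rw [hφa, map_zero])
        simpa using this
      · intro g
        obtain ⟨m, hm⟩ := hnd.2 (g ∘ₗ (N.projectionOnto P hcompl.symm))
        refine ⟨⟨m - ((φ x m) • y - (φ y m) • x), key m⟩, ?_⟩
        ext b
        rw [hφN_apply]
        have hb := memNx b
        have heq : φ (m - ((φ x m) • y - (φ y m) • x)) (b : M) = φ m (b : M) := by
          simp only [map_sub, map_smul, LinearMap.sub_apply, LinearMap.smul_apply,
            smul_eq_mul, hb.1, hb.2]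
          ring
        rw [heq, hm]
        simp [Submodule.projectionOnto_apply_left]
    -- rank computation
    set bP : Module.Basis (Fin 2) R P := Module.Basis.span li with hbPdef
    have hrankN : Module.finrank R N + 2 = r := by
      have bM : Module.Basis (Fin 2 ⊕ Fin (Module.finrank R N)) R M :=
        (bP.prod (Module.finBasis R N)).map (Submodule.prodEquivOfIsCompl P N hcompl)
      have hc := Module.finrank_eq_card_basis bM
      simp [Fintype.card_sum] at hc
      omega
    obtain ⟨n', eN, hGram⟩ := ih (Module.finrank R N) (by omega) N φN haltN hndN rfl
    set σ : (Fin 2 ⊕ Fin (2 * n')) ≃ Fin (2 * (n' + 1)) :=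
      finSumFinEquiv.trans (finCongr (by omega)) with hσdef
    set e' : Module.Basis (Fin 2 ⊕ Fin (2 * n')) R M :=
      (bP.prod eN).map (Submodule.prodEquivOfIsCompl P N hcompl) with he'def
    have hvl : ∀ i : Fin 2, e' (Sum.inl i) = ![x, y] i := by
      intro i
      simp only [he'def, Module.Basis.map_apply, Module.Basis.prod_apply, Sum.elim_inl,
        Function.comp_apply, LinearMap.inl_apply, Submodule.coe_prodEquivOfIsCompl',
        Submodule.coe_zero, add_zero, hbPdef]
      exact congrArg Subtype.val (Module.Basis.span_apply li i)
    have hvr : ∀ i : Fin (2 * n'), e' (Sum.inr i) = ((eN i : N) : M) := by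
      intro i
      simp [he'def, Module.Basis.prod_apply, Submodule.coe_prodEquivOfIsCompl']
    have hσl : ∀ i : Fin 2, ((σ (Sum.inl i) : Fin (2 * (n' + 1))) : ℕ) = (i : ℕ) := by
      intro i; simp [hσdef]
    have hσr : ∀ i : Fin (2 * n'), ((σ (Sum.inr i) : Fin (2 * (n' + 1))) : ℕ) = 2 + (i : ℕ) := by
      intro i; simp [hσdef]; omega
    refine ⟨n' + 1, e'.reindex σ, ?_⟩
    intro j k
    obtain ⟨a, rfl⟩ : ∃ a, j = σ a := ⟨σ.symm j, (σ.apply_symm_apply j).symm⟩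
    obtain ⟨c, rfl⟩ : ∃ c, k = σ c := ⟨σ.symm k, (σ.apply_symm_apply k).symm⟩
    rw [Module.Basis.reindex_apply, Module.Basis.reindex_apply, Equiv.symm_apply_apply,
      Equiv.symm_apply_apply]
    rcases a with i | i <;> rcases c with i' | i'
    · rw [hvl, hvl, hσl, hσl]
      fin_cases i <;> fin_cases i' <;>
        simp [hxy, hyx, halt]
    · rw [hvl, hvr, hσl, hσr]
      have hi := i.isLt
      rw [if_neg (by omega), if_neg (by omega)]
      fin_cases i <;> simp [(memNx (eN i')).1, (memNx (eN i')).2]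
    · rw [hvr, hvl, hσr, hσl]
      have hi' := i'.isLt
      rw [if_neg (by omega), if_neg (by omega)]
      rw [symp_skew φ halt]
      fin_cases i' <;> simp [(memNx (eN i)).1, (memNx (eN i)).2]
    · rw [hvr, hvr, hσr, hσr, ← hφN_apply, hGram i i']
      split_ifs <;> first | rfl | omega

/-- Over a commutative local ring `R`, every finite free module `M`
equipped with a symplectic form `φ` (an alternating bilinear form inducing an isomorphism
`M ≃ Hom_R(M, R)`) admits a basis `e : Fin (2 * n) → M` in which the Gram matrix of `φ`
is block diagonal with `n` blocks `((0, 1), (-1, 0))`. -/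
theorem symplectic_module_over_local_ring_has_standard_basis
    (R : Type*) [CommRing R] [IsLocalRing R]
    (M : Type*) [AddCommGroup M] [Module R M] [Module.Finite R M] [Module.Free R M]
    (φ : M →ₗ[R] M →ₗ[R] R)
    (halt : ∀ x : M, φ x x = 0)
    (hnondeg : Function.Bijective (φ : M → (M →ₗ[R] R))) :
    ∃ (n : ℕ) (e : Module.Basis (Fin (2 * n)) R M),
      ∀ j k : Fin (2 * n),
        φ (e j) (e k) =
          if (j : ℕ) % 2 = 0 ∧ (k : ℕ) = (j : ℕ) + 1 then (1 : R)
          else if (k : ℕ) % 2 = 0 ∧ (j : ℕ) = (k : ℕ) + 1 then (-1 : R)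
          else 0 :=
  symp_aux R (Module.finrank R M) M φ halt hnondeg rfl
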